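/- Let h ∈ ℕ admit a Hadamard matrix H of order h with excess σ(H) = σ. Then there exists a ±1-matrix of order h+1 with determinant of absolute value at least h^(h/2)·(1 + σ/h). -/

import Mathlib

open Matrix

theorem stmt_17 (h : ℕ) (H : Matrix (Fin h) (Fin h) ℝ)
    (hpm : ∀ i j, H i j = 1 ∨ H i j = -1)
    (hH : H * H.transpose = (h : ℝ) • 1) :
    ∃ A : Matrix (Fin (h + 1)) (Fin (h + 1)) ℝ,
      (∀ i j, A i j = 1 ∨ A i j = -1) ∧
      (h : ℝ) ^ ((h : ℝ) / 2) * (1 + (∑ i, ∑ j, H i j) / h) ≤ |A.det| := by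
  rcases Nat.eq_zero_or_pos h with rfl | hpos
  · refine ⟨Matrix.of fun _ _ => 1, fun i j => Or.inl rfl, ?_⟩
    have h1 : (Matrix.of fun (_ _ : Fin (0+1)) => (1:ℝ)).det = 1 := by
      rw [Matrix.det_fin_one]; rfl
    rw [h1]
    simp
  · -- main case
    have hne : (h : ℝ) ≠ 0 := Nat.cast_ne_zero.mpr hpos.ne'
    set B : Matrix (Fin 1) (Fin h) ℝ := Matrix.of fun _ _ => 1 with hBdef
    set C : Matrix (Fin h) (Fin 1) ℝ := Matrix.of fun _ _ => -1 with hCdef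
    have e : Fin (h + 1) ≃ Fin 1 ⊕ Fin h :=
      (finCongr (by omega : h + 1 = 1 + h)).trans finSumFinEquiv.symm
    have hpm' : ∀ a b, Matrix.fromBlocks (1 : Matrix (Fin 1) (Fin 1) ℝ) B C H a b = 1 ∨
        Matrix.fromBlocks 1 B C H a b = -1 := by
      rintro (a | a) (b | b)
      · left; simp [Matrix.fromBlocks, Subsingleton.elim a b, Matrix.one_apply_eq]
      · left; simp [Matrix.fromBlocks, hBdef]
      · right; simp [Matrix.fromBlocks, hCdef]
      · simpa [Matrix.fromBlocks] using hpm a b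
    refine ⟨(Matrix.fromBlocks 1 B C H).submatrix e e, fun i j => hpm' _ _, ?_⟩
    rw [Matrix.det_submatrix_equiv_self, Matrix.det_fromBlocks_one₁₁]
    -- H - C * B = H * (1 + col c * row 1) where c k = (∑ l, H l k)/h
    set c : Fin h → ℝ := fun k => (∑ l, H l k) / h with hcdef
    have horth : ∀ i l, ∑ k, H i k * H l k = if i = l then (h : ℝ) else 0 := by
      intro i l
      have := congrFun (congrFun hH i) l
      simpa [Matrix.mul_apply, Matrix.one_apply, Matrix.smul_apply, mul_ite] using this
    have key : H - C * B = H * (1 + Matrix.replicateCol (Fin 1) c * Matrix.replicateRow (Fin 1) (fun _ => (1:ℝ))) := by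
      rw [Matrix.mul_add, Matrix.mul_one]
      ext i j
      have : (H * (Matrix.replicateCol (Fin 1) c * Matrix.replicateRow (Fin 1) (fun _ => (1:ℝ)))) i j
          = ∑ k, H i k * c k := by
        simp [Matrix.mul_apply, Matrix.replicateCol, Matrix.replicateRow]
      have hsum : ∑ k, H i k * c k = 1 := by
        simp only [hcdef]
        rw [Finset.sum_congr rfl (fun k _ => by
          rw [div_eq_mul_inv, ← mul_assoc] )]
        rw [← Finset.sum_mul]
        have : ∑ k, H i k * ∑ l, H l k = (h : ℝ) := by
          simp_rw [Finset.mul_sum]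
          rw [Finset.sum_comm]
          rw [Finset.sum_congr rfl fun l _ => horth i l]
          simp
        rw [this]
        exact mul_inv_cancel₀ hne
      simp [Matrix.sub_apply, Matrix.add_apply, this, hsum, hCdef, hBdef, Matrix.mul_apply,
        sub_eq_add_neg]
    erw [key, Matrix.det_mul, Matrix.det_one_add_replicateCol_mul_replicateRow]
    have hdot : (fun _ : Fin h => (1:ℝ)) ⬝ᵥ c = (∑ i, ∑ j, H i j) / h := by
      simp only [dotProduct, one_mul, hcdef]
      rw [← Finset.sum_div, Finset.sum_comm]
    rw [hdot]
    -- |det H| = h ^ (h/2)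
    have hsq : H.det ^ 2 = (h : ℝ) ^ h := by
      have := congrArg Matrix.det hH
      rwa [Matrix.det_mul, Matrix.det_transpose, ← sq, Matrix.det_smul, Matrix.det_one,
        mul_one, Fintype.card_fin] at this
    have habs : |H.det| = (h : ℝ) ^ ((h : ℝ) / 2) := by
      have h0 : (0:ℝ) ≤ (h : ℝ) := Nat.cast_nonneg h
      have h2 : ((h : ℝ) ^ ((h : ℝ) / 2)) ^ 2 = (h : ℝ) ^ h := by
        rw [← Real.rpow_natCast (h:ℝ) h, ← Real.rpow_natCast ((h:ℝ) ^ ((h:ℝ)/2)) 2,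
          ← Real.rpow_mul h0]
        norm_num
      have := hsq.trans h2.symm
      have habs2 : |H.det| ^ 2 = ((h : ℝ) ^ ((h : ℝ) / 2)) ^ 2 := by
        rw [sq_abs]; exact this
      exact (sq_eq_sq₀ (abs_nonneg _) (by positivity)).mp habs2
    rw [abs_mul, habs]
    exact mul_le_mul_of_nonneg_left (le_abs_self _) (by positivity)
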